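/- Let V be a bounded self-adjoint operator on a Hilbert space with spectrum contained in [0,1], and let t ≥ 0. Then ‖∫₀ᵗ e^{-V(t-s)} V^{1/2} ds‖ ≤ ∫₀ᵗ (1+t-s)^{-1/2} ds ≤ 2√(1+t); in particular the operator norm of ∫₀ᵗ e^{-V(t-s)} V^{1/2} ds is bounded by 2√(1+t). -/

import Mathlib

open RealInnerProductSpace

section stmt10helpers
open NormedSpace
set_option linter.unusedVariables false
set_option linter.unusedSectionVars false
variable {X : Type*} [NormedAddCommGroup X] [InnerProductSpace ℝ X] [CompleteSpace X]

/-- Cauchy–Schwarz for a positive symmetric operator. -/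
lemma posCS (T : X →L[ℝ] X) (hsym : T.IsSymmetric) (hpos : ∀ z : X, 0 ≤ ⟪T z, z⟫)
    (x y : X) : ⟪T x, y⟫ ^ 2 ≤ ⟪T x, x⟫ * ⟪T y, y⟫ := by
  have key : ∀ s : ℝ, 0 ≤ ⟪T y, y⟫ * (s * s) + (2 * ⟪T x, y⟫) * s + ⟪T x, x⟫ := by
    intro s
    have h0 := hpos (x + s • y)
    have expand : ⟪T (x + s • y), x + s • y⟫ =
        ⟪T y, y⟫ * (s * s) + (2 * ⟪T x, y⟫) * s + ⟪T x, x⟫ := by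
      rw [map_add, map_smul]
      rw [inner_add_left, inner_add_right, inner_add_right]
      rw [inner_smul_left, inner_smul_right, inner_smul_left, inner_smul_right]
      have hyx : ⟪T y, x⟫ = ⟪T x, y⟫ := (hsym y x).trans (real_inner_comm (T x) y)
      simp only [conj_trivial, hyx]
      ring
    rw [expand] at h0
    exact h0
  have hd := discrim_le_zero key
  rw [discrim] at hd
  nlinarith [hd]

lemma pos_norm_sq_le (T : X →L[ℝ] X) (hsym : T.IsSymmetric) (hpos : ∀ z : X, 0 ≤ ⟪T z, z⟫)
    (x : X) : ‖T x‖ ^ 2 ≤ ‖T‖ * ⟪T x, x⟫ := by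
  have h := posCS T hsym hpos x (T x)
  rw [real_inner_self_eq_norm_sq] at h
  have h2 : ⟪T (T x), T x⟫ ≤ ‖T‖ * ‖T x‖ ^ 2 := by
    calc ⟪T (T x), T x⟫ ≤ ‖T (T x)‖ * ‖T x‖ := real_inner_le_norm _ _
    _ ≤ (‖T‖ * ‖T x‖) * ‖T x‖ := by
        have := T.le_opNorm (T x)
        nlinarith [norm_nonneg (T x)]
    _ = ‖T‖ * ‖T x‖ ^ 2 := by ring
  rcases eq_or_lt_of_le (norm_nonneg (T x)) with h0 | h0
  · rw [← h0]
    simpa using mul_nonneg (norm_nonneg T) (hpos x)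
  · have hTxx := hpos x
    have h3 : ⟪T x, x⟫ * ⟪T (T x), T x⟫ ≤ ⟪T x, x⟫ * (‖T‖ * ‖T x‖ ^ 2) :=
      mul_le_mul_of_nonneg_left h2 hTxx
    nlinarith [mul_pos h0 h0]


/-- If the spectrum of a self-adjoint operator is contained in `[0,1]`,
then its quadratic form is bounded by `‖x‖²`. -/
lemma form_le_one (V : X →L[ℝ] X) (hVsa : IsSelfAdjoint V)
    (hspec : spectrum ℝ V ⊆ Set.Icc (0:ℝ) 1) (x : X) : ⟪V x, x⟫ ≤ ‖x‖ ^ 2 := by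
  by_contra hcon
  push_neg at hcon
  have hx0 : x ≠ 0 := by
    rintro rfl
    simp at hcon
  have hxn : (0:ℝ) < ‖x‖ := norm_pos_iff.mpr hx0
  set u : X := ‖x‖⁻¹ • x with hu
  have hun : ‖u‖ = 1 := by
    rw [hu, norm_smul]
    simp [abs_of_nonneg (inv_nonneg.mpr hxn.le), inv_mul_cancel₀ hxn.ne']
  have huform : 1 < ⟪V u, u⟫ := by
    rw [hu, map_smul, inner_smul_left, inner_smul_right]
    simp only [conj_trivial]
    have h1 : ‖x‖⁻¹ * ‖x‖ = 1 := inv_mul_cancel₀ hxn.ne'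
    nlinarith [hcon, mul_pos (inv_pos.mpr hxn) (inv_pos.mpr hxn)]
  set S : Set ℝ := (fun z => ⟪V z, z⟫) '' {z : X | ‖z‖ = 1} with hS
  have hSne : S.Nonempty := ⟨⟪V u, u⟫, u, hun, rfl⟩
  have hSbdd : BddAbove S := by
    refine ⟨‖V‖, ?_⟩
    rintro r ⟨z, hz, rfl⟩
    calc ⟪V z, z⟫ ≤ ‖V z‖ * ‖z‖ := real_inner_le_norm _ _
    _ ≤ ‖V‖ * ‖z‖ * ‖z‖ := by
        have := V.le_opNorm z
        nlinarith [norm_nonneg z]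
    _ = ‖V‖ := by rw [Set.mem_setOf_eq.mp hz]; ring
  set M : ℝ := sSup S with hM
  have hM1 : 1 < M := lt_of_lt_of_le huform (le_csSup hSbdd ⟨u, hun, rfl⟩)
  have hMspec : M ∈ spectrum ℝ V := by
    by_contra hMnot
    rw [spectrum.notMem_iff] at hMnot
    set T : X →L[ℝ] X := algebraMap ℝ (X →L[ℝ] X) M - V with hT
    have hTapp : ∀ z : X, T z = M • z - V z := by
      intro z
      rw [hT, ContinuousLinearMap.sub_apply, Algebra.algebraMap_eq_smul_one,
        ContinuousLinearMap.smul_apply, ContinuousLinearMap.one_apply]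
    have hTsa : IsSelfAdjoint T := by
      rw [hT]
      refine IsSelfAdjoint.sub ?_ hVsa
      rw [Algebra.algebraMap_eq_smul_one]
      exact IsSelfAdjoint.smul (star_trivial M) (IsSelfAdjoint.one _)
    have hTsym : T.IsSymmetric := ContinuousLinearMap.isSelfAdjoint_iff_isSymmetric.mp hTsa
    have hTpos : ∀ z : X, 0 ≤ ⟪T z, z⟫ := by
      intro z
      rcases eq_or_ne z 0 with rfl | hz
      · simp
      · have hzn : (0:ℝ) < ‖z‖ := norm_pos_iff.mpr hz
        have hmem : ⟪V (‖z‖⁻¹ • z), ‖z‖⁻¹ • z⟫ ∈ S := by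
          refine ⟨‖z‖⁻¹ • z, ?_, rfl⟩
          rw [Set.mem_setOf_eq, norm_smul]
          simp [abs_of_nonneg (inv_nonneg.mpr hzn.le), inv_mul_cancel₀ hzn.ne']
        have hle : ⟪V (‖z‖⁻¹ • z), ‖z‖⁻¹ • z⟫ ≤ M := le_csSup hSbdd hmem
        rw [map_smul, inner_smul_left, inner_smul_right] at hle
        simp only [conj_trivial] at hle
        have h1 : ‖z‖⁻¹ * ‖z‖ = 1 := inv_mul_cancel₀ hzn.ne'
        have hVle : ⟪V z, z⟫ ≤ M * ‖z‖^2 := by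
          have he : ⟪V z, z⟫ = (‖z‖⁻¹ * (‖z‖⁻¹ * ⟪V z, z⟫)) * ‖z‖^2 := by
            field_simp
          rw [he]
          exact mul_le_mul_of_nonneg_right hle (sq_nonneg _)
        rw [hTapp, inner_sub_left, inner_smul_left]
        simp only [conj_trivial]
        rw [real_inner_self_eq_norm_sq]
        linarith
    obtain ⟨un, hun'⟩ := hMnot
    set Ci : X →L[ℝ] X := ((un⁻¹ : (X →L[ℝ] X)ˣ) : X →L[ℝ] X) with hCi
    have hinv : ∀ z : X, ‖z‖ ≤ ‖Ci‖ * ‖T z‖ := by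
      intro z
      have hz2 : Ci (T z) = z := by
        rw [← ContinuousLinearMap.mul_apply, ← hun', Units.inv_mul,
          ContinuousLinearMap.one_apply]
      calc ‖z‖ = ‖Ci (T z)‖ := by rw [hz2]
      _ ≤ ‖Ci‖ * ‖T z‖ := Ci.le_opNorm _
    set C : ℝ := ‖Ci‖ with hC
    have hTne : (0:ℝ) < ‖T‖ := by
      rcases (norm_nonneg T).lt_or_eq with h | h
      · exact h
      · exfalso
        have hT0 : T = 0 := by rw [← norm_le_zero_iff, ← h]
        have h2 := hinv u
        rw [hT0] at h2
        simp only [ContinuousLinearMap.zero_apply, norm_zero, mul_zero, hun] at h2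
        linarith
    have hCpos : (0:ℝ) < C := by
      have h2 := hinv u
      rw [hun] at h2
      nlinarith [norm_nonneg (T u), h2]
    set δ : ℝ := 1 / (C^2 * ‖T‖) with hδ
    have hδpos : 0 < δ := by positivity
    have hbound : ∀ r ∈ S, r ≤ M - δ := by
      rintro r ⟨z, hz, rfl⟩
      have hz1 : ‖z‖ = 1 := hz
      have h1 : 1 ≤ C * ‖T z‖ := by have := hinv z; rwa [hz1] at this
      have h2 : ‖T z‖ ^ 2 ≤ ‖T‖ * ⟪T z, z⟫ := pos_norm_sq_le T hTsym hTpos z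
      have h3 : δ ≤ ⟪T z, z⟫ := by
        rw [hδ, div_le_iff₀ (by positivity)]
        have hTz : (0:ℝ) < ‖T z‖ := by nlinarith [norm_nonneg (T z)]
        have hsq : 1 ≤ C^2 * ‖T z‖^2 := by nlinarith
        nlinarith [mul_le_mul_of_nonneg_left h2 (sq_nonneg C)]
      have h4 : ⟪T z, z⟫ = M - ⟪V z, z⟫ := by
        rw [hTapp, inner_sub_left, inner_smul_left]
        simp only [conj_trivial]
        rw [real_inner_self_eq_norm_sq, hz1]
        ring
      rw [h4] at h3
      linarith
    have : M ≤ M - δ := csSup_le hSne hbound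
    linarith
  have := hspec hMspec
  rw [Set.mem_Icc] at this
  linarith

set_option maxHeartbeats 1000000 in
set_option synthInstance.maxHeartbeats 100000 in
lemma key_sq (V W : X →L[ℝ] X) (hVsa : IsSelfAdjoint V) (hWsa : IsSelfAdjoint W)
    (hW2 : W.comp W = V) (hVle1 : ∀ z : X, ⟪V z, z⟫ ≤ ‖z‖ ^ 2)
    (τ : ℝ) (hτ : 0 ≤ τ) (x : X) :
    ‖exp (τ • (-V)) (W x)‖ ^ 2 * (1 + τ) ≤ ‖x‖ ^ 2 := by
  have hVsym : V.IsSymmetric := ContinuousLinearMap.isSelfAdjoint_iff_isSymmetric.mp hVsa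
  have hWsym : W.IsSymmetric := ContinuousLinearMap.isSelfAdjoint_iff_isSymmetric.mp hWsa
  have hVmul : V = W * W := by rw [← hW2]; rfl
  have hWV : Commute W V := by
    rw [hVmul]; exact (Commute.refl W).mul_right (Commute.refl W)
  set E : ℝ → (X →L[ℝ] X) := fun u => exp (u • (-V)) with hE
  have hE0 : E 0 = 1 := by rw [hE]; simp [exp_zero]
  -- inner products with V
  have hVform : ∀ z : X, ⟪V z, z⟫ = ‖W z‖ ^ 2 := by
    intro z
    have h1 : V z = W (W z) := by rw [← hW2]; rfl
    calc ⟪V z, z⟫ = ⟪W (W z), z⟫ := by rw [h1]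
    _ = ⟪W z, W z⟫ := hWsym (W z) z
    _ = ‖W z‖ ^ 2 := real_inner_self_eq_norm_sq _
  -- derivative of E applied to a vector
  have hEd : ∀ (u : ℝ) (v : X), HasDerivAt (fun r => E r v) (-(V (E u v))) u := by
    intro u v
    have h1 : HasDerivAt (fun r : ℝ => exp (r • (-V))) (exp (u • (-V)) * (-V)) u :=
      hasDerivAt_exp_smul_const (-V) u
    have h2 := (ContinuousLinearMap.apply ℝ X v).hasFDerivAt.comp_hasDerivAt u h1
    simp only [ContinuousLinearMap.apply_apply] at h2
    have hVE : Commute (-V) (E u) := ((Commute.refl (-V)).smul_right u).exp_right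
    have h3 : (exp (u • (-V)) * (-V)) v = -(V (E u v)) := by
      rw [show exp (u • (-V)) * (-V) = (-V) * E u from hVE.eq.symm]
      rw [ContinuousLinearMap.mul_apply, ContinuousLinearMap.neg_apply]
    rwa [h3] at h2
  -- continuity of u ↦ E u v
  have hEx : ∀ v : X, Continuous fun u : ℝ => E u v := by
    intro v
    have h1 : Continuous E :=
        continuous_iff_continuousAt.2 fun u => (hasDerivAt_exp_smul_const (-V) u).continuousAt
    exact (ContinuousLinearMap.apply ℝ X v).continuous.comp h1
  -- contraction property
  have hcontr : ∀ (v : X), ∀ u ∈ Set.Ici (0:ℝ), ‖E u v‖ ^ 2 ≤ ‖v‖ ^ 2 := by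
    intro v u hu
    set f : ℝ → ℝ := fun r => ⟪E r v, E r v⟫ with hf
    have hfd : ∀ r : ℝ, HasDerivAt f
        (⟪E r v, -(V (E r v))⟫ + ⟪-(V (E r v)), E r v⟫) r := by
      intro r
      exact (hEd r v).inner ℝ (hEd r v)
    have hanti : AntitoneOn f (Set.Ici (0:ℝ)) := by
      apply antitoneOn_of_deriv_nonpos (convex_Ici 0)
      · exact ((hEx v).inner (hEx v)).continuousOn
      · intro r _
        exact (hfd r).differentiableAt.differentiableWithinAt
      · intro r _
        rw [(hfd r).deriv]
        have h1 : ⟪E r v, -(V (E r v))⟫ = -⟪V (E r v), E r v⟫ := by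
          rw [inner_neg_right, real_inner_comm]
        have h2 : ⟪-(V (E r v)), E r v⟫ = -⟪V (E r v), E r v⟫ := by
          rw [inner_neg_left]
        rw [h1, h2]
        have h3 : 0 ≤ ⟪V (E r v), E r v⟫ := by
          rw [hVform]; positivity
        linarith
    have := hanti (Set.self_mem_Ici) hu hu
    rw [hf] at this
    simp only [hE0, ContinuousLinearMap.one_apply] at this
    rwa [real_inner_self_eq_norm_sq, real_inner_self_eq_norm_sq] at this
  -- main argument
  rcases eq_or_ne (W x) 0 with hw | hw
  · rw [hw, map_zero]
    simp only [norm_zero]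
    nlinarith [sq_nonneg ‖x‖]
  · have hx0 : x ≠ 0 := fun hx => hw (by rw [hx, map_zero])
    set w : X := W x with hwdef
    have hc : (0:ℝ) < ‖x‖ ^ 2 := by
      have := norm_pos_iff.mpr hx0
      positivity
    set c : ℝ := ‖x‖ ^ 2 with hcdef
    -- commutation of W with E u
    have hEW : ∀ u : ℝ, W (E u x) = E u w := by
      intro u
      have h1 : Commute W (E u) := ((hWV.neg_right).smul_right u).exp_right
      have h2 := ContinuousLinearMap.ext_iff.mp h1.eq x
      rwa [ContinuousLinearMap.mul_apply, ContinuousLinearMap.mul_apply] at h2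
    -- E u w never vanishes
    have hnz : ∀ u : ℝ, E u w ≠ 0 := by
      intro u hu0
      have hcomm : Commute ((-u) • (-V)) (u • (-V)) :=
        ((Commute.refl (-V)).smul_left (-u)).smul_right u
      have hprod : E (-u) * E u = 1 := by
        rw [hE]
        rw [← exp_add_of_commute_of_mem_ball (𝕂 := ℝ) hcomm ((expSeries_radius_eq_top ℝ (X →L[ℝ] X)).symm ▸ edist_lt_top _ _)
          ((expSeries_radius_eq_top ℝ (X →L[ℝ] X)).symm ▸ edist_lt_top _ _)]
        rw [← add_smul]
        simp [exp_zero]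
      have : w = 0 := by
        calc w = (E (-u) * E u) w := by rw [hprod]; simp
        _ = E (-u) (E u w) := by rw [ContinuousLinearMap.mul_apply]
        _ = 0 := by rw [hu0, map_zero]
      exact hw this
    set h : ℝ → ℝ := fun r => ⟪E r w, E r w⟫ with hh
    have hpos : ∀ u : ℝ, 0 < h u := by
      intro u
      rw [hh]
      simp only [real_inner_self_eq_norm_sq]
      exact pow_pos (norm_pos_iff.mpr (hnz u)) 2
    have hd : ∀ u : ℝ, HasDerivAt h (-(2 * ⟪V (E u w), E u w⟫)) u := by
      intro u
      have h2 := (hEd u w).inner ℝ (hEd u w)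
      have h3 : ⟪E u w, -(V (E u w))⟫ + ⟪-(V (E u w)), E u w⟫
          = -(2 * ⟪V (E u w), E u w⟫) := by
        rw [inner_neg_right, inner_neg_left, real_inner_comm]
        ring
      rwa [h3] at h2
    -- Cauchy–Schwarz step
    have hkey : ∀ u ∈ Set.Ici (0:ℝ), h u ^ 2 ≤ c * ⟪V (E u w), E u w⟫ := by
      intro u hu
      have hz : ‖E u x‖ ≤ ‖x‖ := by
        have := hcontr x u hu
        nlinarith [norm_nonneg (E u x), norm_nonneg x]
      have h1 : h u = ⟪V (E u x), E u x⟫ := by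
        rw [hh]
        simp only [real_inner_self_eq_norm_sq]
        rw [hVform, ← hEW]
      have h2 : ⟪V (E u x), E u x⟫ ≤ ‖V (E u x)‖ * ‖E u x‖ := real_inner_le_norm _ _
      have h3 : ‖V (E u x)‖ = ‖W (E u w)‖ := by
        have : V (E u x) = W (W (E u x)) := by rw [← hW2]; rfl
        rw [this, hEW]
      have h4 : h u ≤ ‖W (E u w)‖ * ‖x‖ := by
        rw [h1]
        calc ⟪V (E u x), E u x⟫ ≤ ‖V (E u x)‖ * ‖E u x‖ := h2
        _ ≤ ‖W (E u w)‖ * ‖x‖ := by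
            rw [h3]
            exact mul_le_mul_of_nonneg_left hz (norm_nonneg _)
      have h5 : h u ^ 2 ≤ (‖W (E u w)‖ * ‖x‖) ^ 2 :=
        pow_le_pow_left₀ (hpos u).le h4 2
      calc h u ^ 2 ≤ (‖W (E u w)‖ * ‖x‖) ^ 2 := h5
      _ = c * ‖W (E u w)‖ ^ 2 := by rw [hcdef]; ring
      _ = c * ⟪V (E u w), E u w⟫ := by rw [hVform]
    -- the function φ is monotone
    set φ : ℝ → ℝ := fun u => (h u)⁻¹ - 2 / c * u with hφ
    have hφd : ∀ u : ℝ, HasDerivAt φ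
        (-(-(2 * ⟪V (E u w), E u w⟫)) / (h u) ^ 2 - 2 / c) u := by
      intro u
      have hlin : HasDerivAt (fun r : ℝ => 2 / c * r) (2 / c) u := by
        simpa using (hasDerivAt_id u).const_mul (2 / c)
      exact ((hd u).inv (hpos u).ne').sub hlin
    have hφmono : MonotoneOn φ (Set.Ici (0:ℝ)) := by
      apply monotoneOn_of_deriv_nonneg (convex_Ici 0)
      · intro u _
        exact (hφd u).differentiableAt.continuousAt.continuousWithinAt
      · intro u _
        exact (hφd u).differentiableAt.differentiableWithinAt
      · intro u hu
        rw [interior_Ici] at hu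
        rw [(hφd u).deriv]
        have hk := hkey u (Set.mem_Ici.mpr (le_of_lt hu))
        have hhu := hpos u
        rw [neg_neg, sub_nonneg, div_le_div_iff₀ hc (by positivity)]
        nlinarith [hk]
    -- evaluate at 0 and τ
    have h0 : h 0 ≤ c := by
      rw [hh]
      simp only [hE0, ContinuousLinearMap.one_apply]
      rw [real_inner_self_eq_norm_sq, hwdef, ← hVform]
      exact hVle1 x
    have hmono := hφmono Set.self_mem_Ici (Set.mem_Ici.mpr hτ) hτ
    rw [hφ] at hmono
    simp only [mul_zero, sub_zero] at hmono
    have hinv0 : c⁻¹ ≤ (h 0)⁻¹ := by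
      apply inv_anti₀ (hpos 0) h0
    have hA : c⁻¹ + 2 / c * τ ≤ (h τ)⁻¹ := by linarith
    have hHpos := hpos τ
    have hgoal : h τ * (1 + τ) ≤ c := by
      have hstep1 : h τ * (c⁻¹ + 2 / c * τ) ≤ 1 := by
        calc h τ * (c⁻¹ + 2 / c * τ) ≤ h τ * (h τ)⁻¹ :=
              mul_le_mul_of_nonneg_left hA hHpos.le
        _ = 1 := mul_inv_cancel₀ hHpos.ne'
      have hexp : h τ * (c⁻¹ + 2 / c * τ) * c = h τ + 2 * τ * h τ := by
        field_simp
      have h2 := mul_le_mul_of_nonneg_right hstep1 hc.le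
      rw [hexp] at h2
      nlinarith [mul_nonneg hτ hHpos.le]
    have hfin : ‖E τ w‖ ^ 2 = h τ := (real_inner_self_eq_norm_sq (E τ w)).symm
    calc ‖E τ w‖ ^ 2 * (1 + τ) = h τ * (1 + τ) := by rw [hfin]
    _ ≤ c := hgoal

lemma opnorm_bound (V W : X →L[ℝ] X) (hVsa : IsSelfAdjoint V) (hWsa : IsSelfAdjoint W)
    (hW2 : W.comp W = V) (hVle1 : ∀ z : X, ⟪V z, z⟫ ≤ ‖z‖ ^ 2)
    (τ : ℝ) (hτ : 0 ≤ τ) :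
    ‖(exp ((-τ) • V)).comp W‖ ≤ (1 + τ) ^ (-(1/2 : ℝ)) := by
  have h1τ : (0:ℝ) < 1 + τ := by linarith
  apply ContinuousLinearMap.opNorm_le_bound _ (Real.rpow_nonneg h1τ.le _)
  intro x
  rw [ContinuousLinearMap.comp_apply, show (-τ) • V = τ • (-V) by rw [neg_smul, smul_neg]]
  have hk := key_sq V W hVsa hWsa hW2 hVle1 τ hτ x
  have hsq : ‖exp (τ • -V) (W x)‖ ^ 2 ≤ ((1+τ) ^ (-(1/2:ℝ)) * ‖x‖) ^ 2 := by
    have hr : ((1+τ) ^ (-(1/2:ℝ)))^2 = (1+τ)⁻¹ := by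
      rw [← Real.rpow_natCast ((1+τ) ^ (-(1/2:ℝ))) 2, ← Real.rpow_mul h1τ.le]
      norm_num [Real.rpow_neg_one]
    rw [mul_pow, hr, inv_mul_eq_div, le_div_iff₀ h1τ]
    exact hk
  have hb : (0:ℝ) ≤ (1+τ) ^ (-(1/2:ℝ)) * ‖x‖ :=
    mul_nonneg (Real.rpow_nonneg h1τ.le _) (norm_nonneg x)
  nlinarith [norm_nonneg (exp (τ • -V) (W x)), hsq, hb]

end stmt10helpers

open NormedSpace in
/-- For a bounded self-adjoint operator `V` with spectrum in `[0,1]`, `W = V^{1/2}` its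
(unique) nonnegative self-adjoint square root, and `t ≥ 0`:
`‖∫₀ᵗ e^{-V(t-s)} V^{1/2} ds‖ ≤ ∫₀ᵗ (1+t-s)^{-1/2} ds ≤ 2√(1+t)`. -/
theorem stmt10 {X : Type*} [NormedAddCommGroup X] [InnerProductSpace ℝ X] [CompleteSpace X]
    (V : X →L[ℝ] X) (hVsa : IsSelfAdjoint V) (hspec : spectrum ℝ V ⊆ Set.Icc (0:ℝ) 1)
    (W : X →L[ℝ] X) (hWsa : IsSelfAdjoint W) (hWpos : ∀ z : X, 0 ≤ ⟪W z, z⟫)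
    (hW2 : W.comp W = V)
    (t : ℝ) (ht : 0 ≤ t) :
    ‖∫ s in (0:ℝ)..t, (NormedSpace.exp (-(t - s) • V)).comp W‖ ≤
        (∫ s in (0:ℝ)..t, (1 + t - s) ^ (-(1/2 : ℝ))) ∧
      (∫ s in (0:ℝ)..t, (1 + t - s) ^ (-(1/2 : ℝ))) ≤ 2 * Real.sqrt (1 + t) := by
  have hVle1 : ∀ z : X, ⟪V z, z⟫ ≤ ‖z‖ ^ 2 := form_le_one V hVsa hspec
  have hg_contOn : ContinuousOn (fun s : ℝ => (1 + t - s) ^ (-(1/2 : ℝ))) (Set.uIcc 0 t) := by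
    apply ContinuousOn.rpow_const
    · exact (continuous_const.sub continuous_id).continuousOn
    · intro s hs
      rw [Set.uIcc_of_le ht, Set.mem_Icc] at hs
      left
      have : (1:ℝ) ≤ 1 + t - s := by linarith [hs.2]
      linarith
  have hgint : IntervalIntegrable (fun s : ℝ => (1 + t - s) ^ (-(1/2 : ℝ)))
      MeasureTheory.volume 0 t := hg_contOn.intervalIntegrable
  constructor
  · -- first inequality
    have hae : ∀ᵐ s ∂(MeasureTheory.volume.restrict (Set.uIoc (0:ℝ) t)),
        ‖(exp (-(t - s) • V)).comp W‖ ≤ (1 + t - s) ^ (-(1/2 : ℝ)) := by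
      rw [MeasureTheory.ae_restrict_iff' measurableSet_uIoc]
      apply MeasureTheory.ae_of_all
      intro s hs
      rw [Set.uIoc_of_le ht, Set.mem_Ioc] at hs
      have hτ : 0 ≤ t - s := by linarith [hs.2]
      have hb := opnorm_bound V W hVsa hWsa hW2 hVle1 (t - s) hτ
      rw [show (1:ℝ) + t - s = 1 + (t - s) by ring]
      exact hb
    have h1 := intervalIntegral.norm_integral_le_abs_of_norm_le hae hgint
    have hgnonneg : 0 ≤ ∫ s in (0:ℝ)..t, (1 + t - s) ^ (-(1/2 : ℝ)) := by
      apply intervalIntegral.integral_nonneg ht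
      intro u hu
      rw [Set.mem_Icc] at hu
      apply Real.rpow_nonneg
      linarith [hu.2]
    rwa [abs_of_nonneg hgnonneg] at h1
  · -- second inequality
    have hderiv : ∀ s ∈ Set.uIcc (0:ℝ) t,
        HasDerivAt (fun r : ℝ => -2 * Real.sqrt (1 + t - r)) ((1 + t - s) ^ (-(1/2:ℝ))) s := by
      intro s hs
      rw [Set.uIcc_of_le ht, Set.mem_Icc] at hs
      have hpos : (0:ℝ) < 1 + t - s := by linarith [hs.2]
      have h1 : HasDerivAt (fun r : ℝ => 1 + t - r) (-1) s := by
        exact (hasDerivAt_id s).const_sub (1+t)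
      have h2 := (h1.sqrt hpos.ne').const_mul (-2 : ℝ)
      refine h2.congr_deriv ?_
      symm
      have h4 : Real.sqrt (1 + t - s) ≠ 0 := (Real.sqrt_pos.mpr hpos).ne'
      rw [Real.rpow_neg hpos.le, ← Real.sqrt_eq_rpow]
      field_simp
    have heq := intervalIntegral.integral_eq_sub_of_hasDerivAt hderiv hgint
    rw [heq]
    rw [show (1:ℝ) + t - t = 1 by ring, show (1:ℝ) + t - 0 = 1 + t by ring, Real.sqrt_one]
    linarith [Real.sqrt_nonneg (1 + t)]
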